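/- Let G be a countable torsion-free abelian group, let Φ be a finite set of automorphisms of G, let G_0 ≤ G be a subgroup generated by a finite symmetric set A containing 0, and suppose the subgroup G_1 generated by G_0 together with φ(G_0) for all φ ∈ Φ satisfies G_0 + Δ = G_1 for a finite set Δ containing 0. If λ ∈ ℕ satisfies (⋃_{φ∈Φ} (Δ + φ(A) − Δ)) ∩ G_0 ⊆ λ·A (the set of sums of at most λ elements of A), then φ(r·A) ⊆ (rλ)·A + Δ for every φ ∈ Φ and r ∈ ℕ, where r·A denotes the set of sums of at most r elements of A. -/

import Mathlib

open scoped Pointwise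

/-- Sums of (at most) `n` elements of `A` (since `0 ∈ A`). -/
def iterSum {G : Type*} [AddCommGroup G] [DecidableEq G] (A : Finset G) : ℕ → Finset G
  | 0 => {0}
  | n + 1 => iterSum A n + A

lemma iterSum_zero_mem {G : Type*} [AddCommGroup G] [DecidableEq G] (A : Finset G)
    (hA0 : (0 : G) ∈ A) : ∀ n, (0 : G) ∈ iterSum A n
  | 0 => Finset.mem_singleton_self 0
  | n + 1 => by
      have h := iterSum_zero_mem A hA0 n
      simpa [iterSum] using Finset.add_mem_add h hA0

lemma iterSum_add {G : Type*} [AddCommGroup G] [DecidableEq G] (A : Finset G) (m n : ℕ) :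
    iterSum A (m + n) = iterSum A m + iterSum A n := by
  induction n with
  | zero =>
      show iterSum A m = iterSum A m + ({0} : Finset G)
      rw [show ({0} : Finset G) = 0 from rfl, add_zero]
  | succ n ih =>
      rw [← Nat.add_assoc]
      show iterSum A (m + n) + A = iterSum A m + (iterSum A n + A)
      rw [ih, add_assoc]

lemma iterSum_subset_closure {G : Type*} [AddCommGroup G] [DecidableEq G] (A : Finset G) :
    ∀ n, (↑(iterSum A n) : Set G) ⊆ (AddSubgroup.closure (A : Set G) : Set G)
  | 0 => by
      intro x hx
      simp only [iterSum, Finset.coe_singleton, Set.mem_singleton_iff] at hx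
      subst hx
      exact (AddSubgroup.closure (A : Set G)).zero_mem
  | n + 1 => by
      intro x hx
      rw [show iterSum A (n+1) = iterSum A n + A from rfl, Finset.coe_add] at hx
      obtain ⟨y, hy, a, ha, rfl⟩ := Set.mem_add.1 hx
      exact add_mem (iterSum_subset_closure A n hy) (AddSubgroup.subset_closure ha)

/-- If `λ·A` absorbs `(Δ + φ(A) − Δ) ∩ G₀` for all `φ ∈ Φ`, then
`φ(r·A) ⊆ (rλ)·A + Δ` for every `φ ∈ Φ` and `r ∈ ℕ`. -/
theorem stmt6 {G : Type*} [AddCommGroup G] [Countable G] [DecidableEq G]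
    (htf : ∀ (g : G) (n : ℕ), n ≠ 0 → n • g = 0 → g = 0)
    (Φ : Set (G ≃+ G)) (hΦfin : Φ.Finite)
    (A : Finset G) (hA0 : (0 : G) ∈ A) (hAsymm : -A = A)
    (Δ : Finset G) (hΔ0 : (0 : G) ∈ Δ)
    (hΔ : ((AddSubgroup.closure (A : Set G) : Set G) + (Δ : Set G)) =
      (AddSubgroup.closure ((AddSubgroup.closure (A : Set G) : Set G) ∪
        ⋃ φ ∈ Φ, ⇑φ '' (AddSubgroup.closure (A : Set G) : Set G)) : Set G))
    (lam : ℕ)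
    (hlam : (⋃ φ ∈ Φ, ((Δ : Set G) + ⇑φ '' (A : Set G) - (Δ : Set G))) ∩
        (AddSubgroup.closure (A : Set G) : Set G) ⊆ ↑(iterSum A lam)) :
    ∀ φ ∈ Φ, ∀ r : ℕ,
      ⇑φ '' ↑(iterSum A r) ⊆ ↑(iterSum A (r * lam)) + (Δ : Set G) := by
  intro φ hφ r
  induction r with
  | zero =>
      intro x hx
      obtain ⟨y, hy, rfl⟩ := hx
      simp only [iterSum, Finset.coe_singleton, Set.mem_singleton_iff] at hy
      subst hy
      rw [map_zero]
      exact Set.mem_add.2 ⟨0, by simp [iterSum], 0, by simpa using hΔ0, by simp⟩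
  | succ r ih =>
      intro x hx
      obtain ⟨z, hz, rfl⟩ := hx
      rw [show iterSum A (r+1) = iterSum A r + A from rfl, Finset.coe_add] at hz
      obtain ⟨y, hy, a, ha, rfl⟩ := Set.mem_add.1 hz
      rw [map_add]
      -- apply IH to φ y
      obtain ⟨s, hs, d, hd, hsd⟩ := Set.mem_add.1 (ih ⟨y, hy, rfl⟩)
      -- d + φ a ∈ G₁
      have hG1 : d + φ a ∈ (AddSubgroup.closure
          ((AddSubgroup.closure (A : Set G) : Set G) ∪
            ⋃ ψ ∈ Φ, ⇑ψ '' (AddSubgroup.closure (A : Set G) : Set G)) : Set G) := by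
        have hdG1 : (d : G) ∈ (AddSubgroup.closure
            ((AddSubgroup.closure (A : Set G) : Set G) ∪
              ⋃ ψ ∈ Φ, ⇑ψ '' (AddSubgroup.closure (A : Set G) : Set G)) : Set G) := by
          rw [← hΔ]
          exact Set.mem_add.2 ⟨0, (AddSubgroup.closure (A : Set G)).zero_mem, d, hd, by simp⟩
        have hφa : φ a ∈ (AddSubgroup.closure
            ((AddSubgroup.closure (A : Set G) : Set G) ∪
              ⋃ ψ ∈ Φ, ⇑ψ '' (AddSubgroup.closure (A : Set G) : Set G)) : Set G) := by
          apply AddSubgroup.subset_closure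
          refine Set.mem_union_right _ ?_
          exact Set.mem_biUnion hφ ⟨a, AddSubgroup.subset_closure ha, rfl⟩
        exact add_mem hdG1 hφa
      rw [← hΔ] at hG1
      obtain ⟨g, hg, d', hd', hgd'⟩ := Set.mem_add.1 hG1
      -- g ∈ λ·A
      have hgmem : g ∈ (↑(iterSum A lam) : Set G) := by
        apply hlam
        constructor
        · refine Set.mem_biUnion hφ ?_
          have : g = d + φ a - d' := by rw [← hgd']; abel
          rw [this]
          exact Set.sub_mem_sub (Set.add_mem_add hd ⟨a, ha, rfl⟩) hd'
        · exact hg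
      -- assemble
      refine Set.mem_add.2 ⟨s + g, ?_, d', hd', ?_⟩
      · have : (r + 1) * lam = r * lam + lam := by ring
        rw [this, iterSum_add, Finset.coe_add]
        exact Set.mem_add.2 ⟨s, hs, g, hgmem, rfl⟩
      · rw [← hsd, add_assoc s d (φ a), ← hgd']
        abel
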